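/- Let V be a discrete valuation ring and f : X → Spec(V) a morphism of schemes. Then f is submersive if and only if the closure of the generic fiber of f in X surjects onto Spec(V). -/

import Mathlib

open AlgebraicGeometry CategoryTheory Topology Set

universe u

section aux

variable (V : Type u) [CommRing V] [IsDomain V] [IsDiscreteValuationRing V]

private def ηV : PrimeSpectrum V := ⟨⊥, Ideal.bot_prime⟩
private noncomputable def σV : PrimeSpectrum V :=
  ⟨IsLocalRing.maximalIdeal V, inferInstance⟩

variable {V}

lemma two_points (p : PrimeSpectrum V) : p = ηV V ∨ p = σV V := by
  by_cases h : p.asIdeal = ⊥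
  · exact Or.inl (PrimeSpectrum.ext h)
  · exact Or.inr
      (PrimeSpectrum.ext (IsLocalRing.eq_maximalIdeal (IsPrime.to_maximal_ideal h)))

lemma eta_ne_sigma : ηV V ≠ σV V := by
  intro h
  exact IsDiscreteValuationRing.not_a_field V (congrArg PrimeSpectrum.asIdeal h).symm

lemma sigma_closed : IsClosed ({σV V} : Set (PrimeSpectrum V)) :=
  (PrimeSpectrum.isClosed_singleton_iff_isMaximal _).2 (IsLocalRing.maximalIdeal.isMaximal V)

lemma eta_open : IsOpen ({ηV V} : Set (PrimeSpectrum V)) := by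
  have h : ({ηV V} : Set (PrimeSpectrum V)) = {σV V}ᶜ := by
    ext p
    rcases two_points p with h | h <;>
      simp [h, eta_ne_sigma (V := V), (eta_ne_sigma (V := V)).symm]
  rw [h]
  exact sigma_closed.isOpen_compl

lemma sigma_mem_closure_eta : σV V ∈ closure ({ηV V} : Set (PrimeSpectrum V)) := by
  rw [PrimeSpectrum.closure_singleton, PrimeSpectrum.mem_zeroLocus]
  intro x hx
  obtain rfl : x = 0 := by simpa [ηV, Ideal.mem_bot] using hx
  exact (σV V).asIdeal.zero_mem

lemma sigma_not_open : ¬ IsOpen ({σV V} : Set (PrimeSpectrum V)) := by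
  intro h
  have h2 := sigma_mem_closure_eta (V := V)
  rw [mem_closure_iff] at h2
  obtain ⟨p, hp, hp'⟩ := h2 {σV V} h rfl
  exact eta_ne_sigma (V := V) (hp' ▸ hp)

end aux

/-- Let `V` be a discrete valuation ring and `f : X ⟶ Spec V` a morphism of schemes.  Then
`f` is submersive iff the closure of the generic fiber of `f` surjects onto `Spec V`. -/
theorem stmt10 {V : Type u} [CommRing V] [IsDomain V] [IsDiscreteValuationRing V]
    {X : Scheme.{u}} (f : X ⟶ Spec (CommRingCat.of V)) :
    IsQuotientMap f.base ↔
      f.base '' closure (f.base ⁻¹' {(⟨⊥, Ideal.bot_prime⟩ : PrimeSpectrum V)}) =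
        Set.univ := by
  have hcont : Continuous f.base := f.base.hom.continuous
  have hbase : ∀ x : X, f.base x = ηV V ∨ f.base x = σV V := fun x =>
    two_points (V := V) (f.base x : PrimeSpectrum V)
  show IsQuotientMap f.base ↔ f.base '' closure (f.base ⁻¹' {ηV V}) = Set.univ
  have hne : ηV V ≠ σV V := eta_ne_sigma
  constructor
  · intro hq
    rw [isQuotientMap_iff, isCoinducing_iff, and_comm] at hq
    obtain ⟨hsurj, hopen⟩ := hq
    apply eq_univ_of_forall
    intro p
    rcases two_points (V := V) p with rfl | rfl
    · obtain ⟨x, hx⟩ := hsurj (ηV V)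
      exact ⟨x, subset_closure (by exact hx), hx⟩
    · by_contra hc
      have hclosed : IsClosed (f.base ⁻¹' {ηV V}) := by
        have hsub : closure (f.base ⁻¹' {ηV V}) ⊆ f.base ⁻¹' {ηV V} := by
          intro x hx
          rcases hbase x with h | h
          · exact h
          · exact absurd ⟨x, hx, h⟩ hc
        exact closure_subset_iff_isClosed.mp hsub
      have hpre : f.base ⁻¹' {σV V} = (f.base ⁻¹' {ηV V})ᶜ := by
        ext x
        rcases hbase x with h | h <;> [exact iff_of_false (fun e => hne (h.symm.trans e)) (fun e => e h); exact iff_of_true h (fun e => hne (e.symm.trans h))]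
      have hop : IsOpen (f.base ⁻¹' {σV V}) := hpre ▸ hclosed.isOpen_compl
      exact sigma_not_open (V := V) ((hopen {σV V}).mp hop)
  · intro himg
    rw [isQuotientMap_iff, isCoinducing_iff, and_comm]
    constructor
    · intro p
      have hp : p ∈ f.base '' closure (f.base ⁻¹' {ηV V}) := himg ▸ mem_univ p
      obtain ⟨x, _, hx⟩ := hp
      exact ⟨x, hx⟩
    · intro U
      refine ⟨fun hU => ?_, fun h => h.preimage hcont⟩
      by_cases hσU : σV V ∈ U
      · have hηU : ηV V ∈ U := by
          by_contra hηU
          have hUeq : U = {σV V} := by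
            ext p
            rcases two_points (V := V) p with rfl | rfl <;> [exact iff_of_false hηU (fun e => hne e); exact iff_of_true hσU rfl]
          have hσim : σV V ∈ f.base '' closure (f.base ⁻¹' {ηV V}) := himg ▸ mem_univ _
          obtain ⟨x, hxcl, hx⟩ := hσim
          have hclosed : IsClosed (f.base ⁻¹' {ηV V}) := by
            have hpre : f.base ⁻¹' {ηV V} = (f.base ⁻¹' {σV V})ᶜ := by
              ext y
              rcases hbase y with h | h <;> [exact iff_of_true h (fun e => hne (h.symm.trans e)); exact iff_of_false (fun e => hne (e.symm.trans h)) (fun e => e h)]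
            rw [hpre]
            exact IsOpen.isClosed_compl (by rw [hUeq] at hU; exact hU)
          have hmem : x ∈ f.base ⁻¹' {ηV V} := hclosed.closure_eq ▸ hxcl
          exact hne (hmem.symm.trans hx)
        have hU2 : U = univ := by
          apply eq_univ_of_forall
          intro p
          rcases two_points (V := V) p with rfl | rfl
          · exact hηU
          · exact hσU
        rw [hU2]; exact isOpen_univ
      · by_cases hηU : ηV V ∈ U
        · have hU2 : U = {ηV V} := by
            ext p
            rcases two_points (V := V) p with rfl | rfl <;> [exact iff_of_true hηU rfl; exact iff_of_false hσU (fun e => hne e.symm)]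
          rw [hU2]; exact eta_open
        · have hU2 : U = ∅ := by
            ext p
            rcases two_points (V := V) p with rfl | rfl <;> [exact iff_of_false hηU (fun e => e); exact iff_of_false hσU (fun e => e)]
          rw [hU2]; exact isOpen_empty
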